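/- Single-event utility-invariant support (Corollary): in the single-event problem, let U be admissible with derivative U', and let (c, g) be a feasible portfolio with c > 0 that maximizes ∑_i p i · U(c + g i) over all feasible portfolios. Let A = {i : g i > 0} and suppose A is a proper subset of the outcomes. Then Q_A < 1, the identity (∑_i p i · U'(c + g i)) · (1 − Q_A) = (1 − P_A) · U'(c) holds, and A = {i : p i / π i > (1 − P_A) / (1 − Q_A)}; in particular this characterization of the active set does not involve U. -/

import Mathlib

open Finset

/-- Single-event feasibility: nonnegative cash and wagers, unit budget, positive
wealth on every outcome. -/
def FeasibleSingle {n : ℕ} (π : Fin n → ℝ) (c : ℝ) (g : Fin n → ℝ) : Prop :=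
  0 ≤ c ∧ (∀ i, 0 ≤ g i) ∧ (c + ∑ i, π i * g i = 1) ∧ ∀ i, 0 < c + g i

/-- `U` is an admissible utility with derivative `U'`. -/
def Admissible (U U' : ℝ → ℝ) : Prop :=
  (∀ w : ℝ, 0 < w → HasDerivAt U (U' w) w) ∧ (∀ w : ℝ, 0 < w → 0 < U' w) ∧
    StrictAntiOn U' (Set.Ioi 0)

lemma deriv_nonpos_right {φ : ℝ → ℝ} {d ε : ℝ} (hε : 0 < ε)
    (hd : HasDerivAt φ d 0) (h : ∀ t, 0 < t → t < ε → φ t ≤ φ 0) : d ≤ 0 := by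
  have hslope := hasDerivAt_iff_tendsto_slope.mp hd
  have h2 : Filter.Tendsto (slope φ 0) (nhdsWithin 0 (Set.Ioi 0)) (nhds d) :=
    hslope.mono_left (nhdsWithin_mono _ (fun x hx => ne_of_gt hx))
  refine le_of_tendsto h2 ?_
  filter_upwards [Ioo_mem_nhdsGT_of_mem ⟨le_refl (0:ℝ), hε⟩] with t ht
  rw [slope_def_field]
  have : φ t - φ 0 ≤ 0 := sub_nonpos.2 (h t ht.1 ht.2)
  have ht0 : 0 < t - 0 := by simpa using ht.1
  exact div_nonpos_of_nonpos_of_nonneg this ht0.le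

lemma deriv_nonneg_left {φ : ℝ → ℝ} {d ε : ℝ} (hε : 0 < ε)
    (hd : HasDerivAt φ d 0) (h : ∀ t, -ε < t → t < 0 → φ t ≤ φ 0) : 0 ≤ d := by
  have hslope := hasDerivAt_iff_tendsto_slope.mp hd
  have h2 : Filter.Tendsto (slope φ 0) (nhdsWithin 0 (Set.Iio 0)) (nhds d) :=
    hslope.mono_left (nhdsWithin_mono _ (fun x hx => ne_of_lt hx))
  refine ge_of_tendsto h2 ?_
  filter_upwards [Ioo_mem_nhdsLT_of_mem ⟨neg_lt_zero.mpr hε, le_refl (0:ℝ)⟩] with t ht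
  rw [slope_def_field]
  have h1 : φ t - φ 0 ≤ 0 := sub_nonpos.2 (h t ht.1 ht.2)
  have ht0 : t - 0 < 0 := by simpa using ht.2
  exact div_nonneg_of_nonpos h1 ht0.le

/-- single-event utility-invariant support: at a maximizer with
positive cash whose active set `A = {i : g i > 0}` is proper, `Q_A < 1`, the identity
`E[U'] (1 - Q_A) = (1 - P_A) U'(c)` holds, and the active set is exactly the set of
outcomes whose edge ratio exceeds `(1 - P_A)/(1 - Q_A)` — a description free of `U`. -/
theorem single_event_support {n : ℕ} (p π : Fin n → ℝ)
    (hp : ∀ i, 0 < p i) (hpsum : ∑ i, p i = 1) (hπ : ∀ i, 0 < π i)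
    (U U' : ℝ → ℝ) (hU : Admissible U U')
    (c : ℝ) (g : Fin n → ℝ) (hfeas : FeasibleSingle π c g) (hc : 0 < c)
    (hopt : ∀ c' : ℝ, ∀ g' : Fin n → ℝ, FeasibleSingle π c' g' →
      ∑ i, p i * U (c' + g' i) ≤ ∑ i, p i * U (c + g i))
    (hproper : Finset.univ.filter (fun i => 0 < g i) ≠ (Finset.univ : Finset (Fin n))) :
    (∑ i ∈ Finset.univ.filter (fun i => 0 < g i), π i) < 1
    ∧ (∑ i, p i * U' (c + g i)) * (1 - ∑ i ∈ Finset.univ.filter (fun i => 0 < g i), π i)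
        = (1 - ∑ i ∈ Finset.univ.filter (fun i => 0 < g i), p i) * U' c
    ∧ Finset.univ.filter (fun i => 0 < g i)
        = Finset.univ.filter (fun i =>
            (1 - ∑ i ∈ Finset.univ.filter (fun i => 0 < g i), p i)
              / (1 - ∑ i ∈ Finset.univ.filter (fun i => 0 < g i), π i)
            < p i / π i) := by
  obtain ⟨hc0, hg0, hbudget, hw⟩ := hfeas
  obtain ⟨hUder, hU'pos, hU'anti⟩ := hU
  have hn : Nonempty (Fin n) := by
    by_contra h
    rw [not_nonempty_iff] at h
    exact hproper (Subsingleton.elim _ _)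
  set lam : ℝ := ∑ k, p k * U' (c + g k) with hlam
  have hlampos : 0 < lam :=
    Finset.sum_pos (fun k _ => mul_pos (hp k) (hU'pos _ (hw k))) Finset.univ_nonempty
  -- perturbation direction coefficients
  set a : Fin n → Fin n → ℝ := fun i k => (if k = i then (π i)⁻¹ else 0) - 1 with ha
  set φ : Fin n → ℝ → ℝ := fun i t => ∑ k, p k * U ((c + g k) + t * a i k) with hφ
  have hderiv : ∀ i, HasDerivAt (φ i) (p i * U' (c + g i) * (π i)⁻¹ - lam) 0 := by
    intro i
    have h1 : HasDerivAt (φ i) (∑ k, p k * (U' (c + g k) * a i k)) 0 := by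
      apply HasDerivAt.fun_sum
      intro k _
      have hin : HasDerivAt (fun t : ℝ => (c + g k) + t * a i k) (a i k) 0 := by
        simpa using ((hasDerivAt_id (0:ℝ)).mul_const (a i k)).const_add (c + g k)
      have hU2 : HasDerivAt U (U' (c + g k)) ((fun t : ℝ => (c + g k) + t * a i k) 0) := by
        simpa using hUder (c + g k) (hw k)
      have hcomp : HasDerivAt (fun t : ℝ => U ((c + g k) + t * a i k))
          (U' (c + g k) * a i k) 0 := hU2.comp (0 : ℝ) hin
      exact hcomp.const_mul (p k)
    have heq : (∑ k, p k * (U' (c + g k) * a i k))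
        = p i * U' (c + g i) * (π i)⁻¹ - lam := by
      have h2 : ∀ k : Fin n, p k * (U' (c + g k) * a i k)
          = (if k = i then p k * U' (c + g k) * (π i)⁻¹ else 0) - p k * U' (c + g k) := by
        intro k; by_cases h : k = i <;> simp [ha, h] <;> ring
      rw [Finset.sum_congr rfl (fun k _ => h2 k), Finset.sum_sub_distrib,
        Finset.sum_ite_eq' Finset.univ i, if_pos (Finset.mem_univ i), hlam]
    rw [← heq]; exact h1
  -- comparison via feasibility
  have hcomp : ∀ i : Fin n, ∀ t : ℝ, |t| < c → |t| * |(π i)⁻¹ - 1| < c + g i →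
      -t ≤ π i * g i → φ i t ≤ φ i 0 := by
    intro i t ht1 ht2 ht3
    have htc := abs_lt.mp ht1
    have hπi := hπ i
    have hfeas' : FeasibleSingle π (c - t) (fun k => g k + if k = i then t * (π i)⁻¹ else 0) := by
      refine ⟨by linarith [htc.2], ?_, ?_, ?_⟩
      · intro k
        show 0 ≤ g k + if k = i then t * (π i)⁻¹ else 0
        by_cases h : k = i
        · subst h
          rw [if_pos rfl]
          have h4 : g k + t * (π k)⁻¹ = (π k * g k + t) * (π k)⁻¹ := by
            field_simp
            try ring
          rw [h4]
          exact mul_nonneg (by linarith) (inv_pos.mpr hπi).le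
        · rw [if_neg h, add_zero]; exact hg0 k
      · have h5 : ∑ k, π k * (g k + if k = i then t * (π i)⁻¹ else 0)
            = (∑ k, π k * g k) + t := by
          have e1 : ∀ k : Fin n, π k * (g k + if k = i then t * (π i)⁻¹ else 0)
              = π k * g k + (if k = i then π i * (t * (π i)⁻¹) else 0) := by
            intro k
            by_cases h : k = i
            · subst h; rw [if_pos rfl, if_pos rfl]; ring
            · rw [if_neg h, if_neg h]; ring
          rw [Finset.sum_congr rfl (fun k _ => e1 k), Finset.sum_add_distrib,
            Finset.sum_ite_eq' Finset.univ i, if_pos (Finset.mem_univ i)]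
          rw [mul_comm (π i), mul_assoc, inv_mul_cancel₀ (hπ i).ne', mul_one]
        show c - t + ∑ k, π k * (g k + if k = i then t * (π i)⁻¹ else 0) = 1
        rw [h5]; linarith [hbudget]
      · intro k
        show 0 < c - t + (g k + if k = i then t * (π i)⁻¹ else 0)
        by_cases h : k = i
        · subst h
          rw [if_pos rfl]
          have h6 : c - t + (g k + t * (π k)⁻¹) = (c + g k) + t * ((π k)⁻¹ - 1) := by ring
          have h7 : -(|t| * |(π k)⁻¹ - 1|) ≤ t * ((π k)⁻¹ - 1) := by
            rw [← abs_mul]; exact neg_abs_le _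
          rw [h6]; linarith
        · rw [if_neg h, add_zero]
          have := hg0 k
          linarith [htc.2]
    have h8 := hopt (c - t) _ hfeas'
    have h9 : φ i t = ∑ k, p k * U (c - t + (g k + if k = i then t * (π i)⁻¹ else 0)) := by
      refine Finset.sum_congr rfl (fun k _ => ?_)
      congr 1
      by_cases h : k = i <;> simp [ha, h] <;> ring
    have h10 : φ i 0 = ∑ k, p k * U (c + g k) := by
      refine Finset.sum_congr rfl (fun k _ => by simp)
    rw [h9, h10]; exact h8
  -- KKT inequalities
  have hKKT1 : ∀ i, p i * U' (c + g i) * (π i)⁻¹ ≤ lam := by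
    intro i
    have hεpos : 0 < min c ((c + g i) / (1 + |(π i)⁻¹ - 1|)) :=
      lt_min hc (div_pos (hw i) (by positivity))
    have := deriv_nonpos_right hεpos (hderiv i) (fun t ht1 ht2 => by
      have htc : t < c := lt_of_lt_of_le ht2 (min_le_left _ _)
      have htd : t < (c + g i) / (1 + |(π i)⁻¹ - 1|) := lt_of_lt_of_le ht2 (min_le_right _ _)
      have h11 : t * (1 + |(π i)⁻¹ - 1|) < c + g i :=
        (lt_div_iff₀ (by positivity)).mp htd
      refine hcomp i t ?_ ?_ ?_
      · rw [abs_of_pos ht1]; exact htc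
      · rw [abs_of_pos ht1]; nlinarith [abs_nonneg ((π i)⁻¹ - 1)]
      · linarith [mul_nonneg (hπ i).le (hg0 i)])
    linarith
  have hKKT2 : ∀ i, 0 < g i → lam ≤ p i * U' (c + g i) * (π i)⁻¹ := by
    intro i hgi
    have hεpos : 0 < min (min c ((c + g i) / (1 + |(π i)⁻¹ - 1|))) (π i * g i) :=
      lt_min (lt_min hc (div_pos (hw i) (by positivity))) (mul_pos (hπ i) hgi)
    have := deriv_nonneg_left hεpos (hderiv i) (fun t ht1 ht2 => by
      have habs : |t| = -t := abs_of_neg ht2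
      have h12 : -t < min (min c ((c + g i) / (1 + |(π i)⁻¹ - 1|))) (π i * g i) := by
        linarith [neg_lt.mp ht1]
      have htc : -t < c := lt_of_lt_of_le h12 (le_trans (min_le_left _ _) (min_le_left _ _))
      have htd : -t < (c + g i) / (1 + |(π i)⁻¹ - 1|) :=
        lt_of_lt_of_le h12 (le_trans (min_le_left _ _) (min_le_right _ _))
      have h11 : (-t) * (1 + |(π i)⁻¹ - 1|) < c + g i :=
        (lt_div_iff₀ (by positivity)).mp htd
      refine hcomp i t ?_ ?_ ?_
      · rw [habs]; exact htc
      · rw [habs]; nlinarith [abs_nonneg ((π i)⁻¹ - 1), neg_pos.mpr ht2]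
      · exact le_of_lt (lt_of_lt_of_le h12 (min_le_right _ _)))
    linarith
  have heqA : ∀ i, 0 < g i → p i * U' (c + g i) = lam * π i := by
    intro i hgi
    have h13 : p i * U' (c + g i) * (π i)⁻¹ = lam := le_antisymm (hKKT1 i) (hKKT2 i hgi)
    have hπi := (hπ i).ne'
    field_simp at h13
    linarith [h13]
  have hleB : ∀ i, ¬ (0 < g i) → p i * U' c ≤ lam * π i := by
    intro i hgi
    have hgi0 : g i = 0 := le_antisymm (not_lt.mp hgi) (hg0 i)
    have := hKKT1 i
    rw [hgi0] at this
    have hπi := hπ i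
    calc p i * U' c = p i * U' (c + 0) * (π i)⁻¹ * π i := by
          field_simp
          simp
      _ ≤ lam * π i := by nlinarith
  -- algebra
  set A : Finset (Fin n) := Finset.univ.filter (fun i => 0 < g i) with hAdef
  set P : ℝ := ∑ i ∈ A, p i with hP
  set Q : ℝ := ∑ i ∈ A, π i with hQ
  have hsplit : lam = lam * Q + (1 - P) * U' c := by
    have h14 : lam = (∑ i ∈ A, p i * U' (c + g i))
        + ∑ i ∈ Finset.univ.filter (fun i => ¬ 0 < g i), p i * U' (c + g i) := by
      rw [hlam, hAdef]
      exact (Finset.sum_filter_add_sum_filter_not _ _ _).symm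
    have h15 : ∑ i ∈ A, p i * U' (c + g i) = lam * Q := by
      rw [hQ, Finset.mul_sum]
      refine Finset.sum_congr rfl (fun i hi => ?_)
      exact heqA i (Finset.mem_filter.mp hi).2
    have h16 : ∑ i ∈ Finset.univ.filter (fun i => ¬ 0 < g i), p i * U' (c + g i)
        = (1 - P) * U' c := by
      have h17 : ∀ i ∈ Finset.univ.filter (fun i => ¬ 0 < g i),
          p i * U' (c + g i) = p i * U' c := by
        intro i hi
        have hgi0 : g i = 0 := le_antisymm (not_lt.mp (Finset.mem_filter.mp hi).2) (hg0 i)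
        rw [hgi0, add_zero]
      rw [Finset.sum_congr rfl h17, ← Finset.sum_mul]
      congr 1
      have := Finset.sum_filter_add_sum_filter_not Finset.univ (fun i => 0 < g i) p
      rw [hpsum] at this
      rw [hP]; linarith
    linarith [h14, h15, h16]
  have hident : lam * (1 - Q) = (1 - P) * U' c := by ring_nf; ring_nf at hsplit; linarith
  -- P < 1
  obtain ⟨j, hjA⟩ : ∃ j, j ∉ A := by
    by_contra h
    push_neg at h
    exact hproper (Finset.eq_univ_of_forall h)
  have hPlt : P < 1 := by
    have h18 : 0 < ∑ i ∈ Finset.univ.filter (fun i => ¬ 0 < g i), p i := by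
      refine Finset.sum_pos' (fun i _ => (hp i).le) ⟨j, ?_, hp j⟩
      rw [Finset.mem_filter]
      exact ⟨Finset.mem_univ j, fun h => hjA (Finset.mem_filter.mpr ⟨Finset.mem_univ j, h⟩)⟩
    have := Finset.sum_filter_add_sum_filter_not Finset.univ (fun i => 0 < g i) p
    rw [hpsum] at this
    rw [hP]; linarith
  have hQlt : Q < 1 := by
    have h19 : 0 < (1 - P) * U' c := mul_pos (by linarith) (hU'pos c hc)
    nlinarith
  refine ⟨hQlt, hident, ?_⟩
  -- active set characterization
  ext i
  simp only [hAdef, Finset.mem_filter, Finset.mem_univ, true_and]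
  have hU'c := hU'pos c hc
  have h1mQ : 0 < 1 - Q := by linarith
  have hr : (1 - P) / (1 - Q) = lam / U' c := by
    rw [div_eq_div_iff (by linarith : (1:ℝ) - Q ≠ 0) (ne_of_gt hU'c)]
    linarith [hident]
  constructor
  · intro hgi
    rw [hr]
    have hU'lt : U' (c + g i) < U' c :=
      hU'anti (Set.mem_Ioi.mpr hc) (Set.mem_Ioi.mpr (hw i)) (by linarith)
    have hpi : p i / π i = lam / U' (c + g i) := by
      rw [div_eq_div_iff (ne_of_gt (hπ i)) (ne_of_gt (hU'pos _ (hw i)))]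
      linarith [heqA i hgi]
    rw [hpi]
    exact div_lt_div_of_pos_left hlampos (hU'pos _ (hw i)) hU'lt
  · intro hlt
    by_contra hgi
    have h20 := hleB i hgi
    have h21 : p i / π i ≤ lam / U' c := by
      rw [div_le_div_iff₀ (hπ i) hU'c]
      linarith
    rw [hr] at hlt
    linarith
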